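/- Let ν > −1, a > 0 and x > 0. Then 2a² ∫₀ˣ t · J_ν(at)² dt = (a²x² − ν²) · J_ν(ax)² + ( x · (d/dx)[J_ν(ax)] )², where (d/dx)[J_ν(ax)] denotes the derivative at x of the function t ↦ J_ν(at). -/

import Mathlib

open MeasureTheory intervalIntegral

/-- The Bessel function of the first kind of real order `ν`,
`J_ν(y) = ∑_{m=0}^∞ ((-1)^m / (m! Γ(m+ν+1))) (y/2)^{2m+ν}` (for `y > 0`,
using real powers). -/
noncomputable def besselJ (ν y : ℝ) : ℝ :=
  ∑' m : ℕ, ((-1) ^ m / (m.factorial * Real.Gamma (m + ν + 1))) *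
    (y / 2) ^ (2 * (m : ℝ) + ν)

namespace Stmt8Aux

open Filter Topology

noncomputable def cc (ν : ℝ) (m : ℕ) : ℝ :=
  (-1) ^ m / (m.factorial * Real.Gamma (m + ν + 1))

lemma gamma_pos {ν : ℝ} (hν : -1 < ν) (m : ℕ) : 0 < Real.Gamma ((m : ℝ) + ν + 1) :=
  Real.Gamma_pos_of_pos (by have : (0:ℝ) ≤ m := Nat.cast_nonneg m; linarith)

lemma cc_ne {ν : ℝ} (hν : -1 < ν) (m : ℕ) : cc ν m ≠ 0 := by
  unfold cc
  exact div_ne_zero (pow_ne_zero _ (by norm_num))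
    (mul_ne_zero (Nat.cast_ne_zero.mpr m.factorial_ne_zero) (gamma_pos hν m).ne')

lemma abs_cc {ν : ℝ} (hν : -1 < ν) (m : ℕ) :
    |cc ν m| = 1 / (m.factorial * Real.Gamma (m + ν + 1)) := by
  unfold cc
  rw [abs_div, abs_pow, abs_neg, abs_one, one_pow,
    abs_of_pos (mul_pos (by positivity) (gamma_pos hν m))]

/-- The recurrence relation for the coefficients. -/
lemma cc_rec {ν : ℝ} (hν : -1 < ν) (m : ℕ) :
    cc ν m = -(((m : ℝ) + 1) * ((m : ℝ) + 1 + ν)) * cc ν (m + 1) := by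
  have h1 : ((m : ℝ) + ν + 1) ≠ 0 := by
    have : (0:ℝ) ≤ m := Nat.cast_nonneg m; intro h; linarith [hν]
  have hg : Real.Gamma (((m : ℕ) + 1 : ℕ) + ν + 1) = ((m : ℝ) + ν + 1) * Real.Gamma (m + ν + 1) := by
    have := Real.Gamma_add_one h1
    push_cast
    rw [show (m : ℝ) + 1 + ν + 1 = ((m : ℝ) + ν + 1) + 1 by ring, this]
  unfold cc
  rw [hg]
  have hfac : ((m + 1).factorial : ℝ) = ((m : ℝ) + 1) * m.factorial := by
    rw [Nat.factorial_succ]; push_cast; ring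
  rw [hfac, pow_succ]
  have hΓ := (gamma_pos hν m).ne'
  have hf : (m.factorial : ℝ) ≠ 0 := Nat.cast_ne_zero.mpr m.factorial_ne_zero
  field_simp
  ring

lemma abs_cc_succ {ν : ℝ} (hν : -1 < ν) (m : ℕ) :
    |cc ν (m + 1)| = |cc ν m| / (((m : ℝ) + 1) * ((m : ℝ) + 1 + ν)) := by
  have hpos : 0 < ((m : ℝ) + 1) * ((m : ℝ) + 1 + ν) := by
    have : (0:ℝ) ≤ m := Nat.cast_nonneg m
    apply mul_pos <;> linarith
  rw [cc_rec hν m, abs_mul, abs_neg, abs_of_pos hpos]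
  exact (mul_div_cancel_left₀ _ hpos.ne').symm

/-- Main summability lemma, by the ratio test. -/
lemma summable_main {ν : ℝ} (hν : -1 < ν) {R : ℝ} (hR : 0 < R) :
    Summable (fun m : ℕ => ((m : ℝ) + 1) * |cc ν m| * R ^ m) := by
  have hne : ∀ m : ℕ, ((m : ℝ) + 1) * |cc ν m| * R ^ m ≠ 0 := fun m =>
    mul_ne_zero (mul_ne_zero (by positivity) (abs_ne_zero.mpr (cc_ne hν m)))
      (pow_ne_zero _ hR.ne')
  have hpos : ∀ m : ℕ, 0 < ((m : ℝ) + 1) * |cc ν m| * R ^ m := fun m =>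
    lt_of_le_of_ne (by positivity) (Ne.symm (hne m))
  apply summable_of_ratio_test_tendsto_lt_one (l := 0) one_pos
    (Filter.Eventually.of_forall hne)
  have key : ∀ m : ℕ,
      ‖(((m + 1 : ℕ) : ℝ) + 1) * |cc ν (m + 1)| * R ^ (m + 1)‖ / ‖((m : ℝ) + 1) * |cc ν m| * R ^ m‖
        = (((m : ℝ) + 2) / ((m : ℝ) + 1)) * (R / (((m : ℝ) + 1) * ((m : ℝ) + 1 + ν))) := by
    intro m
    have h1 : (0:ℝ) < (m : ℝ) + 1 := by positivity
    have h2 : (0:ℝ) < (m : ℝ) + 1 + ν := by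
      have : (0:ℝ) ≤ m := Nat.cast_nonneg m; linarith
    have hA : 0 < |cc ν m| := abs_pos.mpr (cc_ne hν m)
    have hRm : (0:ℝ) < R ^ m := pow_pos hR m
    rw [Real.norm_eq_abs, Real.norm_eq_abs, abs_of_pos (hpos (m+1)), abs_of_pos (hpos m),
      abs_cc_succ hν m]
    push_cast
    rw [pow_succ]
    field_simp
    ring
  rw [show (0:ℝ) = 1 * (R * 0) by ring]
  refine Tendsto.congr (fun m => (key m).symm) ?_
  apply Tendsto.mul
  · have : Tendsto (fun m : ℕ => 1 + 1 / ((m : ℝ) + 1)) atTop (𝓝 (1 + 0)) :=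
      tendsto_const_nhds.add tendsto_one_div_add_atTop_nhds_zero_nat
    simpa using this.congr (fun m => by field_simp; ring)
  · have hat : Tendsto (fun m : ℕ => ((m : ℝ) + 1) * ((m : ℝ) + 1 + ν)) atTop atTop := by
      apply Filter.Tendsto.atTop_mul_atTop₀
      · exact tendsto_atTop_add_const_right atTop 1 tendsto_natCast_atTop_atTop
      · exact (tendsto_atTop_add_const_right atTop (1 + ν)
          tendsto_natCast_atTop_atTop).congr (fun m => by ring)
    simp only [div_eq_mul_inv]
    exact tendsto_const_nhds.mul hat.inv_tendsto_atTop

noncomputable def d1 (ν : ℝ) (m : ℕ) : ℝ := ((m : ℝ) + 1) * cc ν (m + 1)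
noncomputable def d2 (ν : ℝ) (m : ℕ) : ℝ := ((m : ℝ) + 1) * d1 ν (m + 1)

noncomputable def hh (ν u : ℝ) : ℝ := ∑' m : ℕ, cc ν m * u ^ m
noncomputable def hh1 (ν u : ℝ) : ℝ := ∑' m : ℕ, d1 ν m * u ^ m
noncomputable def hh2 (ν u : ℝ) : ℝ := ∑' m : ℕ, d2 ν m * u ^ m

lemma abs_d1 {ν : ℝ} (hν : -1 < ν) (m : ℕ) :
    |d1 ν m| = |cc ν m| / ((m : ℝ) + 1 + ν) := by
  have h1 : (0:ℝ) < (m : ℝ) + 1 := by positivity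
  have h2 : (0:ℝ) < (m : ℝ) + 1 + ν := by
    have : (0:ℝ) ≤ m := Nat.cast_nonneg m; linarith
  unfold d1
  rw [abs_mul, abs_of_pos h1, abs_cc_succ hν m]
  field_simp


lemma abs_term_le (e : ℕ → ℝ) {u R : ℝ} (huR : |u| ≤ R) (hR : 0 < R) (m : ℕ) :
    |e m * u ^ m| ≤ ((m : ℝ) + 1) * |e m| * R ^ m := by
  have hm : (0:ℝ) ≤ (m : ℝ) := Nat.cast_nonneg m
  rw [abs_mul, abs_pow]
  calc |e m| * |u| ^ m ≤ |e m| * R ^ m := by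
        apply mul_le_mul_of_nonneg_left _ (abs_nonneg _)
        exact pow_le_pow_left₀ (abs_nonneg u) huR m
    _ ≤ ((m : ℝ) + 1) * (|e m| * R ^ m) :=
        le_mul_of_one_le_left (by positivity) (by linarith)
    _ = ((m : ℝ) + 1) * |e m| * R ^ m := (mul_assoc _ _ _).symm

lemma summable_d1_main {ν : ℝ} (hν : -1 < ν) {R : ℝ} (hR : 0 < R) :
    Summable (fun m : ℕ => ((m : ℝ) + 1) * |d1 ν m| * R ^ m) := by
  refine Summable.of_nonneg_of_le (fun m => by positivity) (fun m => ?_)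
    ((summable_main hν hR).mul_left (1 / (1 + ν)))
  have h2 : (0:ℝ) < (m : ℝ) + 1 + ν := by
    have : (0:ℝ) ≤ m := Nat.cast_nonneg m; linarith
  have h3 : (0:ℝ) < 1 + ν := by linarith
  rw [abs_d1 hν m, div_eq_mul_inv, one_div]
  have hle : ((m : ℝ) + 1 + ν)⁻¹ ≤ (1 + ν)⁻¹ := by
    apply inv_anti₀ h3
    have : (0:ℝ) ≤ m := Nat.cast_nonneg m; linarith
  calc ((m : ℝ) + 1) * (|cc ν m| * ((m : ℝ) + 1 + ν)⁻¹) * R ^ m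
      ≤ ((m : ℝ) + 1) * (|cc ν m| * (1 + ν)⁻¹) * R ^ m := by
        apply mul_le_mul_of_nonneg_right _ (by positivity)
        apply mul_le_mul_of_nonneg_left _ (by positivity)
        exact mul_le_mul_of_nonneg_left hle (abs_nonneg _)
    _ = (1 + ν)⁻¹ * (((m : ℝ) + 1) * |cc ν m| * R ^ m) := by ring

/-- Generic term-by-term differentiation for power series whose coefficients satisfy
our summability property. -/
lemma hasDerivAt_tsum_pow (q : ℕ → ℝ)
    (hs : ∀ R : ℝ, 0 < R → Summable (fun m : ℕ => ((m : ℝ) + 1) * |q m| * R ^ m)) (u : ℝ) :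
    HasDerivAt (fun y : ℝ => ∑' m : ℕ, q m * y ^ m)
      (∑' m : ℕ, (((m : ℝ) + 1) * q (m + 1)) * u ^ m) u := by
  set R : ℝ := |u| + 1 with hRdef
  have hR : 0 < R := by positivity
  have hR1 : 1 ≤ R := by
    have := abs_nonneg u; simp only [hRdef]; linarith
  have hmem : u ∈ Set.Ioo (-R) R := by
    constructor
    · have := neg_abs_le u; simp only [hRdef]; linarith
    · have := le_abs_self u; simp only [hRdef]; linarith
  have hbound : ∀ (m : ℕ) (y : ℝ), y ∈ Set.Ioo (-R) R →
      ‖q m * ((m : ℝ) * y ^ (m - 1))‖ ≤ ((m : ℝ) + 1) * |q m| * R ^ m := by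
    intro m y hy
    have hyR : |y| ≤ R := by
      rw [abs_le]; exact ⟨hy.1.le, hy.2.le⟩
    have h1 : |y| ^ (m - 1) ≤ R ^ m :=
      le_trans (pow_le_pow_left₀ (abs_nonneg y) hyR (m - 1))
        (pow_le_pow_right₀ hR1 (Nat.sub_le m 1))
    have : ‖q m * ((m : ℝ) * y ^ (m - 1))‖ = |q m| * ((m : ℝ) * |y| ^ (m - 1)) := by
      rw [Real.norm_eq_abs, abs_mul, abs_mul, Nat.abs_cast, abs_pow]
    rw [this]
    calc |q m| * ((m : ℝ) * |y| ^ (m - 1))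
        ≤ |q m| * (((m : ℝ) + 1) * R ^ m) := by
          apply mul_le_mul_of_nonneg_left _ (abs_nonneg _)
          apply mul_le_mul (by linarith) h1 (by positivity) (by positivity)
      _ = ((m : ℝ) + 1) * |q m| * R ^ m := by ring
  have huR : |u| ≤ R := by simp [hRdef]
  have hvalbound : ∀ m : ℕ, |q m * u ^ m| ≤ ((m : ℝ) + 1) * |q m| * R ^ m :=
    abs_term_le q huR hR
  have key := hasDerivAt_tsum_of_isPreconnected (hs R hR) isOpen_Ioo
    (Convex.isPreconnected (convex_Ioo _ _))
    (g := fun m y => q m * y ^ m) (g' := fun m y => q m * ((m : ℝ) * y ^ (m - 1)))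
    (fun m y _ => (hasDerivAt_pow m y).const_mul (q m))
    hbound hmem
    (Summable.of_abs (Summable.of_nonneg_of_le (fun m => abs_nonneg _) hvalbound (hs R hR)))
    hmem
  have hsum2 : Summable (fun m : ℕ => q m * ((m : ℝ) * u ^ (m - 1))) :=
    Summable.of_abs (Summable.of_nonneg_of_le (fun m => abs_nonneg _)
      (fun m => hbound m u hmem) (hs R hR))
  have heq : ∑' m : ℕ, q m * ((m : ℝ) * u ^ (m - 1))
      = ∑' m : ℕ, (((m : ℝ) + 1) * q (m + 1)) * u ^ m := by
    rw [hsum2.tsum_eq_zero_add]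
    simp only [Nat.cast_zero, zero_mul, mul_zero, zero_add, Nat.add_sub_cancel]
    apply tsum_congr
    intro m
    push_cast
    ring
  rw [heq] at key
  exact key

lemma hasDerivAt_hh {ν : ℝ} (hν : -1 < ν) (u : ℝ) :
    HasDerivAt (hh ν) (hh1 ν u) u :=
  hasDerivAt_tsum_pow (cc ν) (fun _ hR => summable_main hν hR) u

lemma hasDerivAt_hh1 {ν : ℝ} (hν : -1 < ν) (u : ℝ) :
    HasDerivAt (hh1 ν) (hh2 ν u) u :=
  hasDerivAt_tsum_pow (d1 ν) (fun _ hR => summable_d1_main hν hR) u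

lemma continuous_hh {ν : ℝ} (hν : -1 < ν) : Continuous (hh ν) :=
  continuous_iff_continuousAt.mpr fun u => (hasDerivAt_hh hν u).continuousAt

lemma continuous_hh1 {ν : ℝ} (hν : -1 < ν) : Continuous (hh1 ν) :=
  continuous_iff_continuousAt.mpr fun u => (hasDerivAt_hh1 hν u).continuousAt

/-- The hypergeometric-type ODE satisfied by `hh`. -/
lemma hh_ode {ν : ℝ} (hν : -1 < ν) (u : ℝ) :
    u * hh2 ν u + (ν + 1) * hh1 ν u + hh ν u = 0 := by
  set R : ℝ := |u| + 1 with hRdef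
  have hR : 0 < R := by positivity
  have huR : |u| ≤ R := by simp [hRdef]
  have hpow : ∀ m : ℕ, |u| ^ m ≤ R ^ m := fun m => pow_le_pow_left₀ (abs_nonneg u) huR m
  -- summability facts
  have hS0 : Summable (fun m : ℕ => cc ν m * u ^ m) :=
    Summable.of_abs (Summable.of_nonneg_of_le (fun m => abs_nonneg _)
      (abs_term_le (cc ν) huR hR) (summable_main hν hR))
  have hS1 : Summable (fun m : ℕ => d1 ν m * u ^ m) :=
    Summable.of_abs (Summable.of_nonneg_of_le (fun m => abs_nonneg _)
      (abs_term_le (d1 ν) huR hR) (summable_d1_main hν hR))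
  have hSm : Summable (fun m : ℕ => (m : ℝ) * d1 ν m * u ^ m) := by
    apply Summable.of_abs
    apply Summable.of_nonneg_of_le (fun m => abs_nonneg _) _ (summable_d1_main hν hR)
    intro m
    have hm : (0:ℝ) ≤ (m : ℝ) := Nat.cast_nonneg m
    rw [abs_mul, abs_mul, abs_pow, Nat.abs_cast]
    calc (m:ℝ) * |d1 ν m| * |u| ^ m ≤ ((m:ℝ) + 1) * |d1 ν m| * |u| ^ m := by
          apply mul_le_mul_of_nonneg_right _ (by positivity)
          exact mul_le_mul_of_nonneg_right (by linarith) (abs_nonneg _)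
      _ ≤ ((m:ℝ) + 1) * |d1 ν m| * R ^ m := by
          apply mul_le_mul_of_nonneg_left (hpow m) (by positivity)
  -- step 1 : u * hh2 = ∑ m * d1 m * u^m
  have step1 : u * hh2 ν u = ∑' m : ℕ, (m : ℝ) * d1 ν m * u ^ m := by
    unfold hh2
    rw [← tsum_mul_left]
    rw [hSm.tsum_eq_zero_add]
    simp only [Nat.cast_zero, zero_mul, zero_add]
    apply tsum_congr
    intro m
    unfold d2
    push_cast
    ring
  -- step 2
  have step2 : (ν + 1) * hh1 ν u + hh ν u
      = ∑' m : ℕ, (((ν + 1) * d1 ν m + cc ν m) * u ^ m) := by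
    unfold hh1 hh
    rw [← tsum_mul_left, ← Summable.tsum_add (hS1.mul_left _) hS0]
    apply tsum_congr
    intro m
    ring
  have step3 : ∀ m : ℕ, (ν + 1) * d1 ν m + cc ν m = -((m : ℝ) * d1 ν m) := by
    intro m
    rw [cc_rec hν m]
    unfold d1
    ring
  rw [add_assoc, step1, step2]
  have : ∑' m : ℕ, (((ν + 1) * d1 ν m + cc ν m) * u ^ m)
      = -∑' m : ℕ, (m : ℝ) * d1 ν m * u ^ m := by
    rw [← tsum_neg]
    apply tsum_congr
    intro m
    rw [step3 m]
    ring
  rw [this]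
  ring


/-! ### The calculus part -/

noncomputable def Fa (ν a t : ℝ) : ℝ := (a * t / 2) ^ ν * hh ν (a ^ 2 * t ^ 2 / 4)

noncomputable def Qa (ν a t : ℝ) : ℝ :=
  (a * t / 2) ^ ν * (ν * hh ν (a ^ 2 * t ^ 2 / 4)
    + 2 * (a ^ 2 * t ^ 2 / 4) * hh1 ν (a ^ 2 * t ^ 2 / 4))

noncomputable def Ga (ν a t : ℝ) : ℝ :=
  (a ^ 2 * t ^ 2 - ν ^ 2) * (Fa ν a t) ^ 2 + (Qa ν a t) ^ 2

lemma besselJ_eq {ν : ℝ} (y : ℝ) (hy : 0 < y) :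
    besselJ ν y = (y / 2) ^ ν * hh ν (y ^ 2 / 4) := by
  have h2 : (0:ℝ) < y / 2 := by linarith
  unfold besselJ hh
  have key : ∀ m : ℕ, ((-1:ℝ)) ^ m / (m.factorial * Real.Gamma (m + ν + 1))
      * (y / 2) ^ (2 * (m : ℝ) + ν) = (y / 2) ^ ν * (cc ν m * (y ^ 2 / 4) ^ m) := by
    intro m
    have e1 : (y / 2) ^ (2 * (m : ℝ) + ν) = ((y ^ 2 / 4) ^ m) * (y / 2) ^ ν := by
      rw [Real.rpow_add h2]
      congr 1
      rw [show (2 * (m : ℝ)) = ((2 * m : ℕ) : ℝ) by push_cast; ring, Real.rpow_natCast,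
        pow_mul]
      congr 1
      ring
    rw [e1]; unfold cc; ring
  rw [tsum_congr key, tsum_mul_left]

section Derivs

lemma hasDerivAt_inner {a : ℝ} (t : ℝ) :
    HasDerivAt (fun t : ℝ => a ^ 2 * t ^ 2 / 4) (a ^ 2 * t / 2) t := by
  have h := ((hasDerivAt_pow 2 t).const_mul (a ^ 2)).div_const 4
  refine h.congr_deriv ?_
  push_cast
  ring

lemma hasDerivAt_s {ν a : ℝ} (ha : 0 < a) (t : ℝ) (ht : 0 < t) :
    HasDerivAt (fun t : ℝ => (a * t / 2) ^ ν) (ν * (a * t / 2) ^ (ν - 1) * (a / 2)) t := by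
  have hin : HasDerivAt (fun t : ℝ => a * t / 2) (a / 2) t := by
    have h := ((hasDerivAt_id t).const_mul a).div_const 2
    refine h.congr_deriv ?_
    ring
  have hp : (0:ℝ) < a * t / 2 := by positivity
  exact (Real.hasDerivAt_rpow_const (Or.inl hp.ne')).comp t hin

lemma hasDerivAt_Fa {ν a : ℝ} (hν : -1 < ν) (ha : 0 < a) (t : ℝ) (ht : 0 < t) :
    HasDerivAt (Fa ν a) (Qa ν a t / t) t := by
  have hp : (0:ℝ) < a * t / 2 := by positivity
  have hhu := (hasDerivAt_hh hν (a ^ 2 * t ^ 2 / 4)).comp t (hasDerivAt_inner (a := a) t)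
  have h := (hasDerivAt_s (ν := ν) ha t ht).mul hhu
  refine h.congr_deriv ?_
  simp only [Function.comp_apply]
  have hst : (a * t / 2) ^ (ν - 1) = (a * t / 2) ^ ν / (a * t / 2) := by
    rw [Real.rpow_sub hp, Real.rpow_one]
  unfold Qa
  rw [hst]
  field_simp
  ring

lemma hasDerivAt_Qa {ν a : ℝ} (hν : -1 < ν) (ha : 0 < a) (t : ℝ) (ht : 0 < t) :
    HasDerivAt (Qa ν a) ((ν ^ 2 - a ^ 2 * t ^ 2) * Fa ν a t / t) t := by
  have hp : (0:ℝ) < a * t / 2 := by positivity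
  have hu : (0:ℝ) < a ^ 2 * t ^ 2 / 4 := by positivity
  have hhu := (hasDerivAt_hh hν (a ^ 2 * t ^ 2 / 4)).comp t (hasDerivAt_inner (a := a) t)
  have hh1u := (hasDerivAt_hh1 hν (a ^ 2 * t ^ 2 / 4)).comp t (hasDerivAt_inner (a := a) t)
  have hW : HasDerivAt (fun t : ℝ => ν * hh ν (a ^ 2 * t ^ 2 / 4)
      + 2 * (a ^ 2 * t ^ 2 / 4) * hh1 ν (a ^ 2 * t ^ 2 / 4))
      (ν * (hh1 ν (a ^ 2 * t ^ 2 / 4) * (a ^ 2 * t / 2))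
        + (2 * (a ^ 2 * t / 2) * hh1 ν (a ^ 2 * t ^ 2 / 4)
          + 2 * (a ^ 2 * t ^ 2 / 4) * (hh2 ν (a ^ 2 * t ^ 2 / 4) * (a ^ 2 * t / 2)))) t := by
    refine (hhu.const_mul ν).add ?_
    have := (((hasDerivAt_inner (a := a) t).const_mul 2).mul hh1u)
    refine this.congr_deriv ?_
    rfl
  have h := (hasDerivAt_s (ν := ν) ha t ht).mul hW
  refine h.congr_deriv ?_
  have hst : (a * t / 2) ^ (ν - 1) = (a * t / 2) ^ ν / (a * t / 2) := by
    rw [Real.rpow_sub hp, Real.rpow_one]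
  have hode := hh_ode hν (a ^ 2 * t ^ 2 / 4)
  have hH2 : hh2 ν (a ^ 2 * t ^ 2 / 4)
      = (-(ν + 1) * hh1 ν (a ^ 2 * t ^ 2 / 4) - hh ν (a ^ 2 * t ^ 2 / 4))
        / (a ^ 2 * t ^ 2 / 4) := by
    field_simp
    linarith [hode]
  unfold Fa
  rw [hst, hH2]
  field_simp
  ring

lemma hasDerivAt_Ga {ν a : ℝ} (hν : -1 < ν) (ha : 0 < a) (t : ℝ) (ht : 0 < t) :
    HasDerivAt (Ga ν a) (2 * a ^ 2 * (t * (Fa ν a t) ^ 2)) t := by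
  have h1 : HasDerivAt (fun t : ℝ => a ^ 2 * t ^ 2 - ν ^ 2) (a ^ 2 * (2 * t)) t := by
    have := ((hasDerivAt_pow 2 t).const_mul (a ^ 2)).sub_const (ν ^ 2)
    refine this.congr_deriv ?_
    push_cast
    ring
  have hF2 := (hasDerivAt_Fa hν ha t ht).pow 2
  have hQ2 := (hasDerivAt_Qa hν ha t ht).pow 2
  have h := (h1.mul hF2).add hQ2
  refine h.congr_deriv ?_
  simp only [Pi.pow_apply]
  field_simp
  ring

lemma Ga_repr {ν a : ℝ} (ha : 0 < a) (t : ℝ) (ht : 0 < t) :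
    Ga ν a t = 4 * (a * t / 2) ^ (2 * ν + 2) *
      ((hh ν (a ^ 2 * t ^ 2 / 4)) ^ 2
        + ν * hh ν (a ^ 2 * t ^ 2 / 4) * hh1 ν (a ^ 2 * t ^ 2 / 4)
        + (a ^ 2 * t ^ 2 / 4) * (hh1 ν (a ^ 2 * t ^ 2 / 4)) ^ 2) := by
  have hp : (0:ℝ) < a * t / 2 := by positivity
  have e1 : ((a * t / 2) ^ ν) ^ (2:ℕ) = (a * t / 2) ^ (2 * ν) := by
    rw [← Real.rpow_natCast ((a * t / 2) ^ ν) 2, ← Real.rpow_mul hp.le]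
    congr 1
    try (push_cast; ring)
  have e2 : (a * t / 2) ^ (2 * ν + 2) = (a * t / 2) ^ (2 * ν) * (a * t / 2) ^ (2:ℕ) := by
    rw [Real.rpow_add hp, ← Real.rpow_natCast (a * t / 2) 2]
    congr 1
    try (push_cast; ring)
  unfold Ga Fa Qa
  rw [e2, mul_pow, mul_pow, e1]
  ring

end Derivs



section Limits

lemma continuous_K {ν a : ℝ} (hν : -1 < ν) :
    Continuous (fun t : ℝ => (hh ν (a ^ 2 * t ^ 2 / 4)) ^ 2
      + ν * hh ν (a ^ 2 * t ^ 2 / 4) * hh1 ν (a ^ 2 * t ^ 2 / 4)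
      + (a ^ 2 * t ^ 2 / 4) * (hh1 ν (a ^ 2 * t ^ 2 / 4)) ^ 2) := by
  have hq : Continuous (fun t : ℝ => a ^ 2 * t ^ 2 / 4) := by continuity
  have h0 : Continuous (fun t : ℝ => hh ν (a ^ 2 * t ^ 2 / 4)) := (continuous_hh hν).comp hq
  have h1 : Continuous (fun t : ℝ => hh1 ν (a ^ 2 * t ^ 2 / 4)) := (continuous_hh1 hν).comp hq
  exact ((h0.pow 2).add ((continuous_const.mul h0).mul h1)).add (hq.mul (h1.pow 2))

lemma tendsto_Ga_zero {ν a : ℝ} (hν : -1 < ν) (ha : 0 < a) :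
    Filter.Tendsto (Ga ν a) (nhdsWithin 0 (Set.Ioi 0)) (nhds 0) := by
  have hexp : (0:ℝ) < 2 * ν + 2 := by linarith
  have hbase : Filter.Tendsto (fun t : ℝ => a * t / 2) (nhds 0) (nhds 0) := by
    have : Continuous (fun t : ℝ => a * t / 2) := by continuity
    have h := this.tendsto 0
    simpa using h
  have hrpow : Filter.Tendsto (fun t : ℝ => (a * t / 2) ^ (2 * ν + 2)) (nhds 0) (nhds 0) := by
    have hc : ContinuousAt (fun x : ℝ => x ^ (2 * ν + 2)) 0 :=
      Real.continuousAt_rpow_const 0 _ (Or.inr hexp.le)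
    have := hc.tendsto.comp hbase
    rwa [Real.zero_rpow hexp.ne'] at this
  have hK := (continuous_K (a := a) hν).tendsto 0
  have hmain : Filter.Tendsto (fun t : ℝ => 4 * (a * t / 2) ^ (2 * ν + 2) *
      ((hh ν (a ^ 2 * t ^ 2 / 4)) ^ 2
        + ν * hh ν (a ^ 2 * t ^ 2 / 4) * hh1 ν (a ^ 2 * t ^ 2 / 4)
        + (a ^ 2 * t ^ 2 / 4) * (hh1 ν (a ^ 2 * t ^ 2 / 4)) ^ 2)) (nhds 0) (nhds 0) := by
    have := ((tendsto_const_nhds (x := (4:ℝ))).mul hrpow).mul hK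
    simpa using this
  apply Filter.Tendsto.congr' _ (hmain.mono_left nhdsWithin_le_nhds)
  filter_upwards [self_mem_nhdsWithin] with t ht
  exact (Ga_repr ha t ht).symm

lemma integrable_aux {ν a x : ℝ} (hν : -1 < ν) (ha : 0 < a) (hx : 0 < x) :
    IntervalIntegrable (fun t : ℝ => 2 * a ^ 2 * (t * (Fa ν a t) ^ 2)) volume 0 x := by
  -- bound for hh on the compact interval
  obtain ⟨M, hM⟩ := (isCompact_Icc (a := (0:ℝ)) (b := a ^ 2 * x ^ 2 / 4)).exists_bound_of_continuousOn
    ((continuous_hh hν).continuousOn)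
  have hM0 : 0 ≤ M := le_trans (norm_nonneg _) (hM 0 ⟨le_refl _, by positivity⟩)
  set C : ℝ := 2 * a ^ 2 * (a / 2) ^ (2 * ν) * M ^ 2 with hC
  have hC0 : 0 ≤ C := by
    have : (0:ℝ) ≤ (a / 2) ^ (2 * ν) := Real.rpow_nonneg (by positivity) _
    positivity
  -- the dominating function
  have hdom : IntervalIntegrable (fun t : ℝ => C * t ^ (2 * ν + 1)) volume 0 x :=
    (intervalIntegral.intervalIntegrable_rpow' (by linarith)).const_mul C
  rw [intervalIntegrable_iff_integrableOn_Ioc_of_le hx.le] at hdom ⊢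
  have hcont : ContinuousOn (fun t : ℝ => 2 * a ^ 2 * (t * (Fa ν a t) ^ 2)) (Set.Ioc 0 x) := by
    intro t ht
    exact (((continuousAt_const.mul ((continuousAt_id.mul
      (((hasDerivAt_Fa hν ha t ht.1).differentiableAt.continuousAt).pow 2))))).continuousWithinAt)
  refine hdom.integrable.mono (hcont.aestronglyMeasurable measurableSet_Ioc) ?_
  rw [MeasureTheory.ae_restrict_iff' measurableSet_Ioc]
  apply Filter.Eventually.of_forall
  intro t ht
  have ht0 : 0 < t := ht.1
  have hp : (0:ℝ) < a * t / 2 := by positivity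
  have hub : a ^ 2 * t ^ 2 / 4 ∈ Set.Icc (0:ℝ) (a ^ 2 * x ^ 2 / 4) := by
    constructor
    · positivity
    · have : t ^ 2 ≤ x ^ 2 := by nlinarith [ht.2, ht0]
      have := mul_le_mul_of_nonneg_left this (by positivity : (0:ℝ) ≤ a ^ 2)
      linarith
  have hhb : |hh ν (a ^ 2 * t ^ 2 / 4)| ≤ M := hM _ hub
  -- compute the bound
  have e1 : (a * t / 2) ^ (2 * ν) = (a / 2) ^ (2 * ν) * t ^ (2 * ν) := by
    rw [show a * t / 2 = (a / 2) * t by ring, Real.mul_rpow (by positivity) ht0.le]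
  have e2 : ((a * t / 2) ^ ν) ^ (2:ℕ) = (a * t / 2) ^ (2 * ν) := by
    rw [← Real.rpow_natCast ((a * t / 2) ^ ν) 2, ← Real.rpow_mul hp.le]
    congr 1
    push_cast
    ring
  have e3 : t ^ (2 * ν) * t = t ^ (2 * ν + 1) := by
    rw [Real.rpow_add_one ht0.ne']
  rw [Real.norm_eq_abs, Real.norm_eq_abs]
  have habs : |2 * a ^ 2 * (t * Fa ν a t ^ 2)|
      = 2 * a ^ 2 * t * ((a / 2) ^ (2 * ν) * t ^ (2 * ν)) * (hh ν (a ^ 2 * t ^ 2 / 4)) ^ 2 := by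
    unfold Fa
    rw [abs_of_nonneg]
    · rw [mul_pow, e2, e1]; ring
    · have h1 : (0:ℝ) ≤ ((a * t / 2) ^ ν) ^ (2:ℕ) := by positivity
      have h2 : (0:ℝ) ≤ (hh ν (a ^ 2 * t ^ 2 / 4)) ^ 2 := sq_nonneg _
      rw [mul_pow]
      positivity
  rw [habs]
  have hrhs : |C * t ^ (2 * ν + 1)| = C * t ^ (2 * ν + 1) := by
    rw [abs_of_nonneg]
    have : (0:ℝ) ≤ t ^ (2 * ν + 1) := Real.rpow_nonneg ht0.le _
    positivity
  rw [hrhs, hC]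
  have hsq : (hh ν (a ^ 2 * t ^ 2 / 4)) ^ 2 ≤ M ^ 2 := by
    rw [← sq_abs]
    apply pow_le_pow_left₀ (abs_nonneg _) hhb
  have hfac : (0:ℝ) ≤ 2 * a ^ 2 * t * ((a / 2) ^ (2 * ν) * t ^ (2 * ν)) := by
    have h1 : (0:ℝ) ≤ (a / 2) ^ (2 * ν) := Real.rpow_nonneg (by positivity) _
    have h2 : (0:ℝ) ≤ t ^ (2 * ν) := Real.rpow_nonneg ht0.le _
    positivity
  calc 2 * a ^ 2 * t * ((a / 2) ^ (2 * ν) * t ^ (2 * ν)) * (hh ν (a ^ 2 * t ^ 2 / 4)) ^ 2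
      ≤ 2 * a ^ 2 * t * ((a / 2) ^ (2 * ν) * t ^ (2 * ν)) * M ^ 2 :=
        mul_le_mul_of_nonneg_left hsq hfac
    _ = 2 * a ^ 2 * (a / 2) ^ (2 * ν) * M ^ 2 * (t ^ (2 * ν) * t) := by ring
    _ = 2 * a ^ 2 * (a / 2) ^ (2 * ν) * M ^ 2 * t ^ (2 * ν + 1) := by rw [e3]

end Limits

end Stmt8Aux


open Stmt8Aux in
/-- The Lommel-type integral identity for Bessel functions: for `ν > -1`,
`a > 0`, `x > 0`,
`2a² ∫₀ˣ t J_ν(at)² dt = (a²x² - ν²) J_ν(ax)² + (x (d/dx)[J_ν(ax)])²`. -/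
theorem stmt8 (ν a x : ℝ) (hν : -1 < ν) (ha : 0 < a) (hx : 0 < x) :
    2 * a ^ 2 * ∫ t in (0:ℝ)..x, t * (besselJ ν (a * t)) ^ 2
      = (a ^ 2 * x ^ 2 - ν ^ 2) * (besselJ ν (a * x)) ^ 2
        + (x * deriv (fun t : ℝ => besselJ ν (a * t)) x) ^ 2 := by
  -- identification of besselJ with Fa for positive arguments
  have hbJ : ∀ t : ℝ, 0 < t → besselJ ν (a * t) = Fa ν a t := by
    intro t ht
    rw [besselJ_eq (a * t) (by positivity), show (a * t) ^ 2 / 4 = a ^ 2 * t ^ 2 / 4 by ring]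
    rfl
  -- the FTC
  have hFTC : ∫ t in (0:ℝ)..x, 2 * a ^ 2 * (t * (Fa ν a t) ^ 2) = Ga ν a x - 0 := by
    apply intervalIntegral.integral_eq_sub_of_hasDerivAt_of_tendsto hx
      (fun t htm => hasDerivAt_Ga hν ha t htm.1) (integrable_aux hν ha hx)
      (tendsto_Ga_zero hν ha)
    exact ((hasDerivAt_Ga hν ha x hx).continuousAt).continuousWithinAt
  -- rewrite the integral
  have hcong : ∫ t in (0:ℝ)..x, t * (besselJ ν (a * t)) ^ 2
      = ∫ t in (0:ℝ)..x, t * (Fa ν a t) ^ 2 := by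
    apply intervalIntegral.integral_congr_ae
    apply MeasureTheory.ae_of_all
    intro t ht
    rw [Set.uIoc_of_le hx.le] at ht
    rw [hbJ t ht.1]
  -- the derivative
  have hF' : HasDerivAt (fun t : ℝ => besselJ ν (a * t)) (Qa ν a x / x) x := by
    apply (hasDerivAt_Fa hν ha x hx).congr_of_eventuallyEq
    filter_upwards [Ioi_mem_nhds hx] with t ht
    exact hbJ t ht
  rw [hcong, hbJ x hx, hF'.deriv]
  have hQ : x * (Qa ν a x / x) = Qa ν a x := by field_simp
  rw [hQ]
  rw [← intervalIntegral.integral_const_mul]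
  rw [hFTC]
  unfold Ga
  ring
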